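/- arXiv:2009.02580 — 2 statements merged into one kernel-verified Lean document; each statement's English description precedes it below -/
import Mathlib

section
/- Let G and H be locally compact, second countable Hausdorff topological groups, let μ be a left Haar measure on G and ν a left Haar measure on H, and let θ : G → H be a continuous group homomorphism such that the pushforward measure θ_*(μ) is absolutely continuous with respect to ν. Then the image θ(G) (equivalently, the range of θ) is an open subset of H. -/
open MeasureTheory Pointwise

/-- If `θ : G → H` is a continuous homomorphism of locally compact second countable
Hausdorff groups and the pushforward of a left Haar measure `μ` on `G` is absolutely
continuous with respect to a left Haar measure `ν` on `H`, then the range of `θ`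
is open in `H`. -/
theorem stmt0
    {G H : Type*}
    [Group G] [TopologicalSpace G] [IsTopologicalGroup G] [LocallyCompactSpace G]
    [SecondCountableTopology G] [T2Space G] [MeasurableSpace G] [BorelSpace G]
    [Group H] [TopologicalSpace H] [IsTopologicalGroup H] [LocallyCompactSpace H]
    [SecondCountableTopology H] [T2Space H] [MeasurableSpace H] [BorelSpace H]
    (μ : Measure G) [μ.IsHaarMeasure] (ν : Measure H) [ν.IsHaarMeasure]
    (θ : G →* H) (hθ : Continuous θ)
    (habs : μ.map θ ≪ ν) :
    IsOpen (Set.range (θ : G → H)) := by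
  obtain ⟨K, hK, hKmem⟩ := exists_compact_mem_nhds (1 : G)
  have hKpos : 0 < μ K := μ.measure_pos_of_mem_nhds hKmem
  set E : Set H := θ '' K with hE
  have hEcomp : IsCompact E := hK.image hθ
  have hEmeas : MeasurableSet E := hEcomp.measurableSet
  have hEpos : 0 < ν E := by
    rcases (zero_le : 0 ≤ ν E).lt_or_eq with h | h
    · exact h
    · exfalso
      have h0 : μ.map θ E = 0 := habs h.symm
      rw [Measure.map_apply hθ.measurable hEmeas] at h0
      have : μ K = 0 := measure_mono_null (Set.subset_preimage_image θ K) h0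
      exact hKpos.ne' this
  have hdiv : E / E ∈ nhds (1 : H) :=
    Measure.div_mem_nhds_one_of_haar_pos ν E hEmeas hEpos
  have hsub : E / E ⊆ (θ.range : Set H) := by
    rintro x ⟨a, ha, b, hb, rfl⟩
    obtain ⟨a', -, rfl⟩ := ha
    obtain ⟨b', -, rfl⟩ := hb
    exact ⟨a' / b', by simp⟩
  have : IsOpen ((θ.range : Subgroup H) : Set H) :=
    Subgroup.isOpen_of_mem_nhds _ (Filter.mem_of_superset hdiv hsub)
  simpa [MonoidHom.coe_range] using this
end

section
/- Let G and H be locally compact, second countable Hausdorff topological groups, let μ be a left Haar measure on G and ν a left Haar measure on H, and let θ : G → H be a continuous group homomorphism such that the pushforward measure θ_*(μ) is absolutely continuous with respect to ν. Then the subgroup H₀ = θ(G) of H, equipped with the subspace topology, is an open subgroup, and the restriction of ν to H₀ (the measure on H₀ obtained by pulling back ν along the inclusion H₀ ↪ H) is a left Haar measure on the topological group H₀. -/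
open MeasureTheory

/-- Under the standing hypotheses, `H₀ = θ(G)` is an open subgroup of `H` and the
restriction of `ν` to `H₀` (pulled back along the inclusion) is a left Haar measure
(in particular regular) on the topological group `H₀`. -/
theorem stmt2
    {G H : Type*}
    [Group G] [TopologicalSpace G] [IsTopologicalGroup G] [LocallyCompactSpace G]
    [SecondCountableTopology G] [T2Space G] [MeasurableSpace G] [BorelSpace G]
    [Group H] [TopologicalSpace H] [IsTopologicalGroup H] [LocallyCompactSpace H]
    [SecondCountableTopology H] [T2Space H] [MeasurableSpace H] [BorelSpace H]
    (μ : Measure G) [μ.IsHaarMeasure] (ν : Measure H) [ν.IsHaarMeasure] [ν.Regular]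
    (θ : G →* H) (hθ : Continuous θ)
    (habs : μ.map θ ≪ ν) :
    IsOpen ((θ.range : Subgroup H) : Set H) ∧
      (ν.comap ((↑) : θ.range → H)).IsHaarMeasure ∧
      (ν.comap ((↑) : θ.range → H)).Regular := by
  -- the range is measurable, being σ-compact
  have hrange : (θ.range : Set H) = Set.range θ := rfl
  have hmeas : MeasurableSet (θ.range : Set H) := by
    rw [hrange, ← Set.image_univ, ← iUnion_compactCovering G, Set.image_iUnion]
    exact MeasurableSet.iUnion fun n =>
      (((isCompact_compactCovering G n).image hθ).isClosed).measurableSet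
  -- the range has positive measure
  have hpos : 0 < ν (θ.range : Set H) := by
    rcases eq_or_lt_of_le (zero_le (a := ν (θ.range : Set H))) with h0 | h
    · exfalso
      have h1 := habs h0.symm
      rw [Measure.map_apply hθ.measurable hmeas] at h1
      have h2 : θ ⁻¹' (θ.range : Set H) = Set.univ := by
        ext x; simp [hrange]
      rw [h2] at h1
      exact (NeZero.ne' (μ Set.univ)).symm (by simpa using h1)
    · exact h
  -- Steinhaus: the range is a neighborhood of 1
  have hnhds : (θ.range : Set H) ∈ nhds (1 : H) := by
    have hdiv := MeasureTheory.Measure.div_mem_nhds_one_of_haar_pos ν (θ.range : Set H) hmeas hpos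
    refine Filter.mem_of_superset hdiv ?_
    rintro x hx
    rw [Set.mem_div] at hx
    obtain ⟨a, ha, b, hb, rfl⟩ := hx
    exact div_mem ha hb
  have hopen : IsOpen ((θ.range : Subgroup H) : Set H) :=
    Subgroup.isOpen_of_mem_nhds _ hnhds
  refine ⟨hopen, ?_⟩
  have hE : MeasurableEmbedding ((↑) : θ.range → H) :=
    MeasurableEmbedding.subtype_coe hmeas
  -- image of smul
  have key : ∀ (g : θ.range) (t : Set θ.range),
      (((↑) : θ.range → H) '' ((g * ·) ⁻¹' t)) = ((g : H) * ·) ⁻¹' (((↑) : θ.range → H) '' t) ∩ (θ.range : Set H) := by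
    intro g t
    ext x
    constructor
    · rintro ⟨y, hy, rfl⟩
      exact ⟨⟨g * y, hy, rfl⟩, y.2⟩
    · rintro ⟨⟨z, hz, hzx⟩, hx⟩
      refine ⟨⟨x, hx⟩, ?_, rfl⟩
      have : g * (⟨x, hx⟩ : θ.range) = z := by
        apply Subtype.ext
        simpa using hzx.symm
      simpa [this] using hz
  haveI : BorelSpace ↥θ.range := Subtype.borelSpace (θ.range : Set H)
  have hhaar : (ν.comap ((↑) : θ.range → H)).IsHaarMeasure := by
    refine { lt_top_of_isCompact := ?_, toIsMulLeftInvariant := ?_, toIsOpenPosMeasure := ?_ }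
    rotate_left
    · constructor
      intro g
      ext t ht
      rw [Measure.map_apply ((continuous_mul_left g).measurable) ht, hE.comap_apply, hE.comap_apply, key]
      have h2 : ν (((g : H) * ·) ⁻¹' (((↑) : θ.range → H) '' t)) = ν (((↑) : θ.range → H) '' t) :=
        measure_preimage_mul ν _ _
      -- preimage is contained in range
      have h3 : ((g : H) * ·) ⁻¹' (((↑) : θ.range → H) '' t) ⊆ (θ.range : Set H) := by
        rintro x hx
        obtain ⟨z, hz, hzx⟩ := hx
        have : x = (g : H)⁻¹ * (z : H) := by
          rw [hzx]; simp
        rw [this]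
        exact mul_mem (inv_mem g.2) z.2
      rw [Set.inter_eq_self_of_subset_left h3, h2]
    · constructor
      intro U hU hUne
      rw [hE.comap_apply]
      have : IsOpen (((↑) : θ.range → H) '' U) := hopen.isOpenEmbedding_subtypeVal.isOpenMap _ hU
      exact (this.measure_pos ν (hUne.image _)).ne'
    · intro K hK
      rw [hE.comap_apply]
      exact (hK.image continuous_subtype_val).measure_lt_top
  refine ⟨hhaar, ?_⟩
  haveI := hhaar
  haveI : LocallyCompactSpace θ.range := hopen.locallyCompactSpace
  haveI : SecondCountableTopology θ.range := Topology.IsEmbedding.subtypeVal.secondCountableTopology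
  haveI : TopologicalSpace.PseudoMetrizableSpace θ.range := Topology.IsInducing.subtypeVal.pseudoMetrizableSpace
  haveI : SigmaCompactSpace θ.range := sigmaCompactSpace_of_locallyCompact_secondCountable
  exact Measure.Regular.of_sigmaCompactSpace_of_isLocallyFiniteMeasure _
end
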